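/- Let $T$ be a $C_2$ tableau with $e_2T\ne0$. If $C(T)<D(T)$ then $e_2$ changes a $\bar2$ in the bottom row to a $2$, and $A(e_2T)=A(T)$, $B(e_2T)=B(T)$, $C(e_2T)=C(T)$, $D(e_2T)=D(T)-1$. If $C(T)\ge D(T)$ then $e_2$ changes a $\bar2$ in the top row to a $2$, and $A(e_2T)=A(T)-1$, $B(e_2T)=B(T)+1$, $C(e_2T)=C(T)+1$, $D(e_2T)=D(T)$. -/

import Mathlib

/-! The `C₂` alphabet `1 < 2 < 2̄ < 1̄`, encoded as the integers `1, 2, -2, -1`. -/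

/-- Position of a letter of the `C₂` alphabet: `1 ↦ 1`, `2 ↦ 2`, `2̄ ↦ 3`, `1̄ ↦ 4`. -/
def cpos (x : ℤ) : ℤ := if 0 < x then x else 5 + x

/-- A `C₂` tableau on a two-row Young diagram with row lengths `p ≥ q`:
rows weakly increase, columns strictly increase, no column contains both `1` and `1̄`,
and no configuration with `2` in the top row of a column and `2̄` in the bottom row of
a weakly later column. -/
structure C2Tab (p q : ℕ) where
  hq : q ≤ p
  top : ℕ → ℤ
  bot : ℕ → ℤ
  htop : ∀ i < p, top i = 1 ∨ top i = 2 ∨ top i = -2 ∨ top i = -1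
  hbot : ∀ i < q, bot i = 1 ∨ bot i = 2 ∨ bot i = -2 ∨ bot i = -1
  row_top : ∀ i j, i ≤ j → j < p → cpos (top i) ≤ cpos (top j)
  row_bot : ∀ i j, i ≤ j → j < q → cpos (bot i) ≤ cpos (bot j)
  col_strict : ∀ i < q, cpos (top i) < cpos (bot i)
  no_one_barone : ∀ i < q, ¬ (top i = 1 ∧ bot i = -1)
  no_config : ∀ i j, i ≤ j → j < q → ¬ (top i = 2 ∧ bot j = -2)

/-- The column word of a `C₂` tableau: for each two-row column, bottom then top entry,
left to right, followed by the one-row entries left to right (length `p + q`). -/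
def cword {p q : ℕ} (T : C2Tab p q) (m : ℕ) : ℤ :=
  if m < 2 * q then (if m % 2 = 0 then T.bot (m / 2) else T.top (m / 2)) else T.top (m - q)

/-- The `i`-signature of a letter (colors `i : Fin 2`, with `0` for color 1 and `1` for
color 2): for color 1, `2, 1̄ ↦ +` and `1, 2̄ ↦ −`; for color 2, `2̄ ↦ +`, `2 ↦ −`,
`1, 1̄ ↦ ∗` (recorded as `0`). -/
def csig (i : Fin 2) (x : ℤ) : ℤ :=
  if i = 0 then (if x = 2 ∨ x = -1 then 1 else -1)
  else (if x = -2 then 1 else if x = 2 then -1 else 0)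

def plusCount {p q : ℕ} (T : C2Tab p q) (i : Fin 2) (a b : ℕ) : ℕ :=
  ((Finset.Ico a b).filter (fun m => csig i (cword T m) = 1)).card

def minusCount {p q : ℕ} (T : C2Tab p q) (i : Fin 2) (a b : ℕ) : ℕ :=
  ((Finset.Ico a b).filter (fun m => csig i (cword T m) = -1)).card

/-- Position `m` of the column word carries a `+` of the `i`-signature surviving the
reduction (removal of `+ ∗⋯∗ −` factors). -/
def unmatchedPlus {p q : ℕ} (T : C2Tab p q) (i : Fin 2) (m : ℕ) : Prop :=
  m < p + q ∧ csig i (cword T m) = 1 ∧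
  ∀ j, m < j → j < p + q → minusCount T i (m + 1) (j + 1) ≤ plusCount T i (m + 1) (j + 1)

/-- The Kashiwara operator `e_i` acts at position `m`: the leftmost `+` of the reduced
`i`-signature. -/
def actsAt {p q : ℕ} (T : C2Tab p q) (i : Fin 2) (m : ℕ) : Prop :=
  unmatchedPlus T i m ∧ ∀ m' < m, csig i (cword T m') = 1 → ¬ unmatchedPlus T i m'

/-- The raised value of a letter: `e_1` sends `2 ↦ 1`, `1̄ ↦ 2̄`; `e_2` sends `2̄ ↦ 2`. -/
def raiseLetter (i : Fin 2) (x : ℤ) : ℤ := if i = 0 then (if x = 2 then 1 else -2) else 2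

/-- `e_i T = T'` (in particular `e_i T ≠ 0`). -/
def eRel {p q : ℕ} (i : Fin 2) (T T' : C2Tab p q) : Prop :=
  ∃ m, actsAt T i m ∧ cword T' m = raiseLetter i (cword T m) ∧
    ∀ m', m' < p + q → m' ≠ m → cword T' m' = cword T m'

/-- `A(T)` = number of `2̄`'s in the top row. -/
def Astat {p q : ℕ} (T : C2Tab p q) : ℕ :=
  ((Finset.range p).filter (fun i => T.top i = -2)).card

/-- `B(T)` = number of `2`'s in the top row plus number of `1̄`'s in the bottom row. -/
def Bstat {p q : ℕ} (T : C2Tab p q) : ℕ :=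
  ((Finset.range p).filter (fun i => T.top i = 2)).card +
  ((Finset.range q).filter (fun i => T.bot i = -1)).card

/-- `C(T)` = number of `2`'s in the top row. -/
def Cstat {p q : ℕ} (T : C2Tab p q) : ℕ :=
  ((Finset.range p).filter (fun i => T.top i = 2)).card

/-- `D(T)` = number of `2̄`'s in the bottom row. -/
def Dstat {p q : ℕ} (T : C2Tab p q) : ℕ :=
  ((Finset.range q).filter (fun i => T.bot i = -2)).card

/-! ### Auxiliary machinery -/

namespace E2Aux

@[simp] lemma cpos_one : cpos 1 = 1 := by norm_num [cpos]
@[simp] lemma cpos_two : cpos 2 = 2 := by norm_num [cpos]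
@[simp] lemma cpos_negtwo : cpos (-2) = 3 := by norm_num [cpos]
@[simp] lemma cpos_negone : cpos (-1) = 4 := by norm_num [cpos]

lemma csig_plus (x : ℤ) : csig 1 x = 1 ↔ x = -2 := by
  unfold csig
  rw [if_neg (by decide : ¬ (1 : Fin 2) = 0)]
  split_ifs with h1 h2 <;> constructor <;> intro hc <;> first | omega | exact hc.elim

lemma csig_minus (x : ℤ) : csig 1 x = -1 ↔ x = 2 := by
  unfold csig
  rw [if_neg (by decide : ¬ (1 : Fin 2) = 0)]
  split_ifs with h1 h2 <;> constructor <;> intro hc <;> first | omega | exact hc.elim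

/-- Word position of top entry in column `i`. -/
def topPos (q i : ℕ) : ℕ := if i < q then 2 * i + 1 else q + i

/-- Column of a top word position. -/
def topCol (q m : ℕ) : ℕ := if m < 2 * q then m / 2 else m - q

lemma topPos_lt {p q : ℕ} (hq : q ≤ p) {i : ℕ} (hi : i < p) : topPos q i < p + q := by
  unfold topPos; split <;> omega

lemma topPos_mono {q i j : ℕ} (h : i ≤ j) : topPos q i ≤ topPos q j := by
  unfold topPos; split <;> split <;> omega

lemma topPos_strict {q i j : ℕ} (h : i < j) : topPos q i < topPos q j := by
  unfold topPos; split <;> split <;> omega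

lemma topPos_inj {q i j : ℕ} (h : topPos q i = topPos q j) : i = j := by
  unfold topPos at h; split at h <;> split at h <;> omega

lemma topPos_ne_bot {q i i' : ℕ} (hi' : i' < q) : topPos q i ≠ 2 * i' := by
  unfold topPos; split <;> omega

lemma topCol_topPos {q i : ℕ} : topCol q (topPos q i) = i := by
  unfold topCol topPos
  by_cases h : i < q
  · rw [if_pos h, if_pos (by omega)]; omega
  · rw [if_neg h, if_neg (by omega)]; omega

lemma cword_bot {p q : ℕ} (T : C2Tab p q) {i : ℕ} (hi : i < q) :
    cword T (2 * i) = T.bot i := by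
  unfold cword
  rw [if_pos (by omega), if_pos (by omega : 2 * i % 2 = 0)]
  congr 1; omega

lemma cword_top {p q : ℕ} (T : C2Tab p q) (hq : q ≤ p) {i : ℕ} (hi : i < p) :
    cword T (topPos q i) = T.top i := by
  unfold cword topPos
  by_cases h : i < q
  · rw [if_pos h, if_pos (by omega), if_neg (by omega)]
    congr 1; omega
  · rw [if_neg h, if_neg (by omega)]
    congr 1; omega

lemma cword_cases {p q : ℕ} (T : C2Tab p q) (hq : q ≤ p) {m : ℕ} (hm : m < p + q) :
    (m < 2 * q ∧ m % 2 = 0 ∧ cword T m = T.bot (m / 2) ∧ m / 2 < q) ∨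
    (∃ i, i < p ∧ m = topPos q i ∧ cword T m = T.top i) := by
  by_cases h1 : m < 2 * q
  · by_cases h2 : m % 2 = 0
    · left
      refine ⟨h1, h2, ?_, by omega⟩
      unfold cword
      rw [if_pos h1, if_pos h2]
    · right
      refine ⟨m / 2, by omega, ?_, ?_⟩
      · unfold topPos; rw [if_pos (by omega)]; omega
      · unfold cword; rw [if_pos h1, if_neg h2]
  · right
    refine ⟨m - q, by omega, ?_, ?_⟩
    · unfold topPos; rw [if_neg (by omega)]; omega
    · unfold cword; rw [if_neg h1]

/-- bottom 2 columns come before bottom 2̄ columns -/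
lemma O1 {p q : ℕ} (T : C2Tab p q) {i i' : ℕ} (h : T.bot i = 2) (h' : T.bot i' = -2)
    (hi : i < q) (hi' : i' < q) : i < i' := by
  by_contra hc
  have := T.row_bot i' i (by omega) hi
  rw [h, h'] at this
  simp at this

/-- a bottom 2̄ position precedes any top 2 position -/
lemma O2 {p q : ℕ} (T : C2Tab p q) {i j : ℕ} (hb : T.bot i = -2) (hi : i < q)
    (ht : T.top j = 2) (hj : j < p) : 2 * i < topPos q j := by
  by_cases hjq : j < q
  · have hij : i < j := by
      by_contra hc
      exact T.no_config j i (by omega) hi ⟨ht, hb⟩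
    unfold topPos; rw [if_pos hjq]; omega
  · unfold topPos; rw [if_neg hjq]; omega

/-- top 2 positions precede top 2̄ positions -/
lemma O3 {p q : ℕ} (T : C2Tab p q) {j2 j3 : ℕ} (h2 : T.top j2 = 2) (h3 : T.top j3 = -2)
    (hj2 : j2 < p) (hj3 : j3 < p) : topPos q j2 < topPos q j3 := by
  have : j2 < j3 := by
    by_contra hc
    have := T.row_top j3 j2 (by omega) hj2
    rw [h2, h3] at this
    simp at this
  exact topPos_strict this

/-- a bottom 2̄ position precedes any top 2̄ position -/
lemma O5 {p q : ℕ} (T : C2Tab p q) {i j : ℕ} (hb : T.bot i = -2) (hi : i < q)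
    (ht : T.top j = -2) (hj : j < p) : 2 * i < topPos q j := by
  by_cases hjq : j < q
  · have hbj : T.bot j = -1 := by
      have hcs := T.col_strict j hjq
      rw [ht] at hcs
      rcases T.hbot j hjq with h | h | h | h
      · rw [h] at hcs; simp at hcs
      · rw [h] at hcs; simp at hcs
      · rw [h] at hcs; simp at hcs
      · exact h
    have hij : i < j := by
      by_contra hc
      have := T.row_bot j i (by omega) hi
      rw [hbj, hb] at this
      simp at this
    unfold topPos; rw [if_pos hjq]; omega
  · unfold topPos; rw [if_neg hjq]; omega

/-- If `C(T) < D(T)`, any acting position is a bottom-row `2̄`. -/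
lemma argA {p q : ℕ} (T : C2Tab p q) (hCD : Cstat T < Dstat T) (m : ℕ)
    (ha : actsAt T 1 m) : m < 2 * q ∧ m % 2 = 0 ∧ cword T m = -2 := by
  have hq := T.hq
  obtain ⟨⟨hmlt, hsig, _⟩, hleft⟩ := ha
  have hcw : cword T m = -2 := (csig_plus _).1 hsig
  rcases cword_cases T hq hmlt with ⟨hb1, hb2, _, _⟩ | ⟨j, hjp, hje, hjt⟩
  · exact ⟨hb1, hb2, hcw⟩
  exfalso
  have hjtop : T.top j = -2 := by omega
  have hD1 : 0 < Dstat T := by omega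
  obtain ⟨k0, ⟨hk0q, hk0b⟩, hk0min⟩ :
      ∃ k0, (k0 < q ∧ T.bot k0 = -2) ∧ ∀ i, i < q → T.bot i = -2 → k0 ≤ i := by
    have hne : ((Finset.range q).filter (fun i => T.bot i = -2)).Nonempty :=
      Finset.card_pos.mp hD1
    refine ⟨((Finset.range q).filter (fun i => T.bot i = -2)).min' hne, ?_, ?_⟩
    · have hmem := Finset.min'_mem _ hne
      rw [Finset.mem_filter, Finset.mem_range] at hmem
      exact hmem
    · intro i hiq hib
      exact Finset.min'_le _ i (by rw [Finset.mem_filter, Finset.mem_range]; exact ⟨hiq, hib⟩)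
  have hm0m : 2 * k0 < m := by
    have := O5 T hk0b hk0q hjtop hjp
    omega
  have hsig0 : csig 1 (cword T (2 * k0)) = 1 := by
    rw [cword_bot T hk0q, hk0b]
    exact (csig_plus _).2 rfl
  apply hleft (2 * k0) hm0m hsig0
  refine ⟨by omega, hsig0, ?_⟩
  intro j' hj1 hj2
  by_cases hz : minusCount T 1 (2 * k0 + 1) (j' + 1) = 0
  · omega
  · have hpos : 0 < minusCount T 1 (2 * k0 + 1) (j' + 1) := Nat.pos_of_ne_zero hz
    unfold minusCount at hpos
    obtain ⟨m2, hm2⟩ := Finset.card_pos.mp hpos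
    rw [Finset.mem_filter, Finset.mem_Ico] at hm2
    obtain ⟨⟨hm21, hm22⟩, hm23⟩ := hm2
    have hcw2 : cword T m2 = 2 := (csig_minus _).1 hm23
    have hm2lt : m2 < p + q := by omega
    rcases cword_cases T hq hm2lt with ⟨hc1, hc2, hc3, hc4⟩ | ⟨j2, hj2p, hj2e, hj2t⟩
    · exfalso
      have hbO : T.bot (m2 / 2) = 2 := by omega
      have := O1 T hbO hk0b hc4 hk0q
      omega
    have hj2top : T.top j2 = 2 := by omega
    -- plusCount ≥ D - 1
    have hplus : Dstat T ≤ plusCount T 1 (2 * k0 + 1) (j' + 1) + 1 := by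
      have hmm : k0 ∈ (Finset.range q).filter (fun i => T.bot i = -2) := by
        simp [Finset.mem_filter, hk0q, hk0b]
      have hcard : ((((Finset.range q).filter (fun i => T.bot i = -2))).erase k0).card + 1
          = Dstat T := Finset.card_erase_add_one hmm
      have hle : ((((Finset.range q).filter (fun i => T.bot i = -2))).erase k0).card
          ≤ plusCount T 1 (2 * k0 + 1) (j' + 1) := by
        unfold plusCount
        apply Finset.card_le_card_of_injOn (fun i => 2 * i)
        · intro i hi
          rw [Finset.mem_coe, Finset.mem_erase, Finset.mem_filter, Finset.mem_range] at hi
          obtain ⟨hik, hiq, hib⟩ := hi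
          have hk0le : k0 ≤ i := hk0min i hiq hib
          have hlt : 2 * i < topPos q j2 := O2 T hib hiq hj2top hj2p
          beta_reduce; rw [Finset.mem_coe, Finset.mem_filter, Finset.mem_Ico]
          refine ⟨⟨by omega, by omega⟩, ?_⟩
          rw [cword_bot T hiq, hib]
          exact (csig_plus _).2 rfl
        · intro a _ b _ hab
          dsimp only at hab
          omega
      omega
    -- minusCount ≤ C
    have hminus : minusCount T 1 (2 * k0 + 1) (j' + 1) ≤ Cstat T := by
      have hform : ∀ m' ∈ (Finset.Ico (2 * k0 + 1) (j' + 1)).filter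
          (fun x => csig 1 (cword T x) = -1),
          ∃ i, i < p ∧ m' = topPos q i ∧ T.top i = 2 := by
        intro m' hm'
        rw [Finset.mem_filter, Finset.mem_Ico] at hm'
        obtain ⟨⟨ha1, ha2⟩, ha3⟩ := hm'
        have hcwm : cword T m' = 2 := (csig_minus _).1 ha3
        have hm'lt : m' < p + q := by omega
        rcases cword_cases T hq hm'lt with ⟨hc1, hc2, hc3, hc4⟩ | ⟨i, hip, hie, hit⟩
        · exfalso
          have hbO : T.bot (m' / 2) = 2 := by omega
          have := O1 T hbO hk0b hc4 hk0q
          omega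
        · exact ⟨i, hip, hie, by omega⟩
      unfold minusCount Cstat
      apply Finset.card_le_card_of_injOn (fun m' => topCol q m')
      · intro m' hm'
        obtain ⟨i, hip, hie, hit⟩ := hform m' hm'
        beta_reduce; rw [Finset.mem_coe, Finset.mem_filter, Finset.mem_range]
        rw [hie, topCol_topPos]
        exact ⟨hip, hit⟩
      · intro a hA b hB hab
        obtain ⟨ia, hia, hea, _⟩ := hform a hA
        obtain ⟨ib, hib, heb, _⟩ := hform b hB
        dsimp only at hab
        rw [hea, heb, topCol_topPos, topCol_topPos] at hab
        rw [hea, heb, hab]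
    omega

/-- If `D(T) ≤ C(T)`, any acting position is a top-row `2̄`. -/
lemma argB {p q : ℕ} (T : C2Tab p q) (hDC : Dstat T ≤ Cstat T) (m : ℕ)
    (ha : actsAt T 1 m) : (m % 2 = 1 ∨ 2 * q ≤ m) ∧ cword T m = -2 := by
  have hq := T.hq
  obtain ⟨⟨hmlt, hsig, hum⟩, _⟩ := ha
  have hcw : cword T m = -2 := (csig_plus _).1 hsig
  refine ⟨?_, hcw⟩
  by_contra hcon
  push_neg at hcon
  obtain ⟨h1, h2⟩ := hcon
  have heven : m % 2 = 0 := by omega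
  have hi0 : m / 2 < q := by omega
  have hbot0 : T.bot (m / 2) = -2 := by
    have h := cword_bot T hi0
    rw [show 2 * (m / 2) = m by omega] at h
    omega
  have hD1 : 0 < Dstat T := by
    have hmm : m / 2 ∈ (Finset.range q).filter (fun i => T.bot i = -2) := by
      simp [Finset.mem_filter, hi0, hbot0]
    exact Finset.card_pos.mpr ⟨_, hmm⟩
  have hC1 : 0 < Cstat T := lt_of_lt_of_le hD1 hDC
  obtain ⟨jC, ⟨hjCp, hjCtop⟩, hjCmax⟩ :
      ∃ jC, (jC < p ∧ T.top jC = 2) ∧ ∀ i, i < p → T.top i = 2 → i ≤ jC := by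
    have hne : ((Finset.range p).filter (fun i => T.top i = 2)).Nonempty :=
      Finset.card_pos.mp hC1
    refine ⟨((Finset.range p).filter (fun i => T.top i = 2)).max' hne, ?_, ?_⟩
    · have hmem := Finset.max'_mem _ hne
      rw [Finset.mem_filter, Finset.mem_range] at hmem
      exact hmem
    · intro i hip hit
      exact Finset.le_max' _ i (by rw [Finset.mem_filter, Finset.mem_range]; exact ⟨hip, hit⟩)
  have hmj : m < topPos q jC := by
    have := O2 T hbot0 hi0 hjCtop hjCp
    omega
  have hjlt : topPos q jC < p + q := topPos_lt hq hjCp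
  have hkey := hum (topPos q jC) hmj hjlt
  have hminus : Cstat T ≤ minusCount T 1 (m + 1) (topPos q jC + 1) := by
    unfold minusCount Cstat
    apply Finset.card_le_card_of_injOn (fun i => topPos q i)
    · intro i hi
      rw [Finset.mem_coe, Finset.mem_filter, Finset.mem_range] at hi
      obtain ⟨hip, hit⟩ := hi
      beta_reduce; rw [Finset.mem_coe, Finset.mem_filter, Finset.mem_Ico]
      refine ⟨⟨?_, ?_⟩, ?_⟩
      · have := O2 T hbot0 hi0 hit hip; omega
      · have hile : i ≤ jC := hjCmax i hip hit
        have := topPos_mono (q := q) hile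
        omega
      · rw [cword_top T hq hip, hit]
        exact (csig_minus _).2 rfl
    · intro a _ b _ hab
      dsimp only at hab
      exact topPos_inj hab
  have hplus : plusCount T 1 (m + 1) (topPos q jC + 1) + 1 ≤ Dstat T := by
    have hmem0 : m / 2 ∈ (Finset.range q).filter (fun i => T.bot i = -2) := by
      simp [Finset.mem_filter, hi0, hbot0]
    have hcard : (((Finset.range q).filter (fun i => T.bot i = -2)).erase (m / 2)).card + 1
        = Dstat T := Finset.card_erase_add_one hmem0
    have hbform : ∀ m' ∈ (Finset.Ico (m + 1) (topPos q jC + 1)).filter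
        (fun x => csig 1 (cword T x) = 1),
        m' % 2 = 0 ∧ m' / 2 < q ∧ T.bot (m' / 2) = -2 ∧ m' / 2 ≠ m / 2 := by
      intro m' hm'
      rw [Finset.mem_filter, Finset.mem_Ico] at hm'
      obtain ⟨⟨hm1', hm2'⟩, hm3'⟩ := hm'
      have hcw' : cword T m' = -2 := (csig_plus _).1 hm3'
      have hm'lt : m' < p + q := by omega
      rcases cword_cases T hq hm'lt with ⟨hb1, hb2, hb3, hb4⟩ | ⟨i, hip, hie, hit⟩
      · exact ⟨hb2, hb4, by omega, by omega⟩
      · exfalso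
        have hitop : T.top i = -2 := by omega
        have h23 := O3 T hjCtop hitop hjCp hip
        omega
    have hle : plusCount T 1 (m + 1) (topPos q jC + 1) ≤
        (((Finset.range q).filter (fun i => T.bot i = -2)).erase (m / 2)).card := by
      unfold plusCount
      apply Finset.card_le_card_of_injOn (fun m' => m' / 2)
      · intro m' hm'
        obtain ⟨hb2, hb4, hb3, hb5⟩ := hbform m' hm'
        beta_reduce; rw [Finset.mem_coe, Finset.mem_erase, Finset.mem_filter, Finset.mem_range]
        exact ⟨hb5, hb4, hb3⟩
      · intro a hA b hB hab
        obtain ⟨ha2, _, _, _⟩ := hbform a hA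
        obtain ⟨hb2, _, _, _⟩ := hbform b hB
        dsimp only at hab
        omega
    omega
  omega

end E2Aux

open E2Aux in
/-- Effect of `e₂` on a `C₂` tableau `T` with `e₂T ≠ 0`:
if `C(T) < D(T)` then `e₂` changes a `2̄` in the bottom row to a `2` (the acting
position of the column word is a bottom-row position) and `A, B, C` are preserved
while `D` drops by one; if `C(T) ≥ D(T)` then `e₂` changes a `2̄` in the top row to a
`2`, `A` drops by one, `B` and `C` increase by one, and `D` is preserved. -/
theorem e2_statistics (p q : ℕ) (T T' : C2Tab p q) (h : eRel 1 T T') :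
    (Cstat T < Dstat T →
      (∀ m, actsAt T 1 m → m < 2 * q ∧ m % 2 = 0 ∧ cword T m = -2) ∧
      Astat T' = Astat T ∧ Bstat T' = Bstat T ∧
      Cstat T' = Cstat T ∧ Dstat T' + 1 = Dstat T) ∧
    (Dstat T ≤ Cstat T →
      (∀ m, actsAt T 1 m → (m % 2 = 1 ∨ 2 * q ≤ m) ∧ cword T m = -2) ∧
      Astat T' + 1 = Astat T ∧ Bstat T' = Bstat T + 1 ∧
      Cstat T' = Cstat T + 1 ∧ Dstat T' = Dstat T) := by
  obtain ⟨m, hacts, hchange, hrest⟩ := h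
  have hq := T.hq
  have hmlt : m < p + q := hacts.1.1
  have hcw : cword T m = -2 := (csig_plus _).1 hacts.1.2.1
  have hraise : cword T' m = 2 := by
    rw [hchange]
    unfold raiseLetter
    rw [if_neg (by decide : ¬ (1 : Fin 2) = 0)]
  constructor
  · -- case C < D
    intro hCD
    refine ⟨fun m' ha' => argA T hCD m' ha', ?_⟩
    obtain ⟨hm1, hm2, _⟩ := argA T hCD m hacts
    have hi0q : m / 2 < q := by omega
    have hbotT : T.bot (m / 2) = -2 := by
      have h := cword_bot T hi0q
      rw [show 2 * (m / 2) = m by omega] at h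
      omega
    have htopeq : ∀ i, i < p → T'.top i = T.top i := by
      intro i hip
      have h1 := cword_top T hq hip
      have h2 := cword_top T' hq hip
      have hne : topPos q i ≠ m := by unfold topPos; split <;> omega
      rw [hrest _ (topPos_lt hq hip) hne] at h2
      omega
    have hboteq : ∀ i, i < q → i ≠ m / 2 → T'.bot i = T.bot i := by
      intro i hiq hne
      have h1 := cword_bot T hiq
      have h2 := cword_bot T' hiq
      rw [hrest _ (by omega) (by omega)] at h2
      omega
    have hbotT' : T'.bot (m / 2) = 2 := by
      have h2 := cword_bot T' hi0q
      rw [show 2 * (m / 2) = m by omega, hraise] at h2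
      omega
    have hAset : (Finset.range p).filter (fun i => T'.top i = -2) =
        (Finset.range p).filter (fun i => T.top i = -2) := by
      apply Finset.filter_congr
      intro i hi
      rw [Finset.mem_range] at hi
      rw [htopeq i hi]
    have hCset : (Finset.range p).filter (fun i => T'.top i = 2) =
        (Finset.range p).filter (fun i => T.top i = 2) := by
      apply Finset.filter_congr
      intro i hi
      rw [Finset.mem_range] at hi
      rw [htopeq i hi]
    have hBset : (Finset.range q).filter (fun i => T'.bot i = -1) =
        (Finset.range q).filter (fun i => T.bot i = -1) := by
      apply Finset.filter_congr
      intro i hi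
      rw [Finset.mem_range] at hi
      by_cases hii : i = m / 2
      · subst hii
        rw [hbotT', hbotT]
        norm_num
      · rw [hboteq i hi hii]
    have hDset : (Finset.range q).filter (fun i => T'.bot i = -2) =
        ((Finset.range q).filter (fun i => T.bot i = -2)).erase (m / 2) := by
      ext i
      simp only [Finset.mem_erase, Finset.mem_filter, Finset.mem_range]
      constructor
      · rintro ⟨hiq2, hib⟩
        have hii : i ≠ m / 2 := by
          intro hcontra
          rw [hcontra, hbotT'] at hib
          omega
        rw [hboteq i hiq2 hii] at hib
        exact ⟨hii, hiq2, hib⟩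
      · rintro ⟨hii, hiq2, hib⟩
        exact ⟨hiq2, by rw [hboteq i hiq2 hii]; exact hib⟩
    refine ⟨by unfold Astat; rw [hAset], ?_, by unfold Cstat; rw [hCset], ?_⟩
    · unfold Bstat; rw [hCset, hBset]
    · unfold Dstat
      rw [hDset]
      exact Finset.card_erase_add_one (by simp [Finset.mem_filter, hi0q, hbotT])
  · -- case D ≤ C
    intro hDC
    refine ⟨fun m' ha' => argB T hDC m' ha', ?_⟩
    obtain ⟨hm1, _⟩ := argB T hDC m hacts
    obtain ⟨i0, hi0p, hi0e, hi0t⟩ : ∃ i, i < p ∧ m = topPos q i ∧ cword T m = T.top i := by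
      rcases cword_cases T hq hmlt with ⟨hb1, hb2, _, _⟩ | hok
      · omega
      · exact hok
    have hti0 : T.top i0 = -2 := by omega
    have htopT' : T'.top i0 = 2 := by
      have h2 := cword_top T' hq hi0p
      rw [← hi0e, hraise] at h2
      omega
    have htopeq : ∀ i, i < p → i ≠ i0 → T'.top i = T.top i := by
      intro i hip hne
      have h1 := cword_top T hq hip
      have h2 := cword_top T' hq hip
      have hne2 : topPos q i ≠ m := by
        rw [hi0e]
        intro hc
        exact hne (topPos_inj hc)
      rw [hrest _ (topPos_lt hq hip) hne2] at h2
      omega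
    have hboteq : ∀ i, i < q → T'.bot i = T.bot i := by
      intro i hiq
      have h1 := cword_bot T hiq
      have h2 := cword_bot T' hiq
      have hne : 2 * i ≠ m := by
        rw [hi0e]
        exact fun hc => topPos_ne_bot hiq hc.symm
      rw [hrest _ (by omega) hne] at h2
      omega
    have hAset : (Finset.range p).filter (fun i => T'.top i = -2) =
        ((Finset.range p).filter (fun i => T.top i = -2)).erase i0 := by
      ext i
      simp only [Finset.mem_erase, Finset.mem_filter, Finset.mem_range]
      constructor
      · rintro ⟨hip, hit⟩
        have hii : i ≠ i0 := by
          intro hcontra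
          rw [hcontra, htopT'] at hit
          omega
        rw [htopeq i hip hii] at hit
        exact ⟨hii, hip, hit⟩
      · rintro ⟨hii, hip, hit⟩
        exact ⟨hip, by rw [htopeq i hip hii]; exact hit⟩
    have hCset : (Finset.range p).filter (fun i => T'.top i = 2) =
        insert i0 ((Finset.range p).filter (fun i => T.top i = 2)) := by
      ext i
      simp only [Finset.mem_insert, Finset.mem_filter, Finset.mem_range]
      constructor
      · rintro ⟨hip, hit⟩
        by_cases hii : i = i0
        · exact Or.inl hii
        · rw [htopeq i hip hii] at hit
          exact Or.inr ⟨hip, hit⟩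
      · rintro (hii | ⟨hip, hit⟩)
        · subst hii
          exact ⟨hi0p, htopT'⟩
        · have hii : i ≠ i0 := by
            intro hcontra
            rw [hcontra, hti0] at hit
            omega
          exact ⟨hip, by rw [htopeq i hip hii]; exact hit⟩
    have hBset : (Finset.range q).filter (fun i => T'.bot i = -1) =
        (Finset.range q).filter (fun i => T.bot i = -1) := by
      apply Finset.filter_congr
      intro i hi
      rw [Finset.mem_range] at hi
      rw [hboteq i hi]
    have hDset : (Finset.range q).filter (fun i => T'.bot i = -2) =
        (Finset.range q).filter (fun i => T.bot i = -2) := by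
      apply Finset.filter_congr
      intro i hi
      rw [Finset.mem_range] at hi
      rw [hboteq i hi]
    have hAmem : i0 ∈ (Finset.range p).filter (fun i => T.top i = -2) := by
      simp [Finset.mem_filter, hi0p, hti0]
    have hCnot : i0 ∉ (Finset.range p).filter (fun i => T.top i = 2) := by
      simp [Finset.mem_filter, hti0]
    have hCcard : ((Finset.range p).filter (fun i => T'.top i = 2)).card =
        ((Finset.range p).filter (fun i => T.top i = 2)).card + 1 := by
      rw [hCset, Finset.card_insert_of_notMem hCnot]
    refine ⟨?_, ?_, ?_, ?_⟩
    · unfold Astat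
      rw [hAset]
      exact Finset.card_erase_add_one hAmem
    · unfold Bstat
      rw [hCcard, hBset]
      omega
    · unfold Cstat
      exact hCcard
    · unfold Dstat
      rw [hDset]
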